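/- arXiv:2605.25316 — 2 statements merged into one kernel-verified Lean document; each statement's English description precedes it below -/
import Mathlib

section
/- Fix an integer j′ ≥ 1, a prior existence weight b ≥ 0, a clutter intensity value λ ≥ 0, and nonnegative likelihood values s_1,…,s_{j′}. Define the existence factor F on ε ∈ {0,1} by F(1) = b, F(0) = 1; for j < j′ define S_j(1,1) = s_j, S_j(1,0) = 1, S_j(0,0) = 1, S_j(0,1) = 0; and for the component's own measurement define S_{j′}(1,1) = s_{j′}, S_{j′}(1,0) = 0, S_{j′}(0,1) = λ, S_{j′}(0,0) = 1. Then for every α = (α_1,…,α_{j′}) ∈ {0,1}^{j′}, writing A = {j : α_j = 1}: ∑_{ε∈{0,1}} F(ε)·∏_{j=1}^{j′} S_j(ε, α_j) equals 1 if A = ∅; equals 0 if A ≠ ∅ and j′ ∉ A; and equals (λ if A = {j′} else 0) + b·∏_{j∈A} s_j if j′ ∈ A. Hence marginalizing the existence variable in the factorized model for a new Bernoulli component reproduces exactly the local hypothesis weights: weight 1 for non-existence, weight 0 for any association not containing the component's own measurement, and weight δ_1[|A|]·λ + b∏_{j∈A}s_j for a detection with measurement subset A containing the own measurement. -/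
open scoped BigOperators

lemma myProdIndicator {t : Finset ℕ} (α : ℕ → Bool) :
    (∏ j ∈ t, (if α j then (0:ℝ) else 1)) =
      if t.filter (fun j => α j = true) = ∅ then 1 else 0 := by
  by_cases h : t.filter (fun j => α j = true) = ∅
  · rw [if_pos h]
    apply Finset.prod_eq_one
    intro j hj
    have : α j ≠ true := by
      intro hαj
      exact (Finset.eq_empty_iff_forall_notMem.mp h j) (Finset.mem_filter.mpr ⟨hj, hαj⟩)
    simp [this]
  · rw [if_neg h]
    obtain ⟨j, hj⟩ := Finset.nonempty_iff_ne_empty.mpr h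
    have hjt := (Finset.mem_filter.mp hj).1
    have hαj := (Finset.mem_filter.mp hj).2
    exact Finset.prod_eq_zero hjt (by simp [hαj])

/-- Marginalizing the existence variable of a new Bernoulli component (created by its
own measurement `j′`) in the factorized model reproduces exactly the local hypothesis
weights: weight `1` for non-existence (`A = ∅`), weight `0` for any association not
containing the own measurement, and weight `δ_1[|A|]·λ + b·∏_{j∈A} s_j` for a detection
with measurement subset `A ∋ j′`. Here the existence factor is `F(1) = b, F(0) = 1`;
for `j < j′` the likelihood factor is `S_j(1,1) = s_j, S_j(1,0) = 1, S_j(0,0) = 1,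
S_j(0,1) = 0`; and for the own measurement `S_{j′}(1,1) = s_{j′}, S_{j′}(1,0) = 0,
S_{j′}(0,1) = λ, S_{j′}(0,0) = 1`. -/
theorem new_component_marginalization (j' : ℕ) (hj' : 1 ≤ j') (b lam : ℝ)
    (hb : 0 ≤ b) (hlam : 0 ≤ lam)
    (s : ℕ → ℝ) (hs : ∀ j ∈ Finset.Icc 1 j', 0 ≤ s j) (α : ℕ → Bool) :
    (∑ ε : Bool, (if ε then b else 1) *
        ∏ j ∈ Finset.Icc 1 j',
          (if j = j' then
            (if ε then (if α j then s j else 0) else (if α j then lam else 1))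
          else
            (if α j then (if ε then s j else 0) else 1))) =
      if ((Finset.Icc 1 j').filter fun j => α j = true) = ∅ then 1
      else if j' ∈ (Finset.Icc 1 j').filter fun j => α j = true then
        (if ((Finset.Icc 1 j').filter fun j => α j = true) = {j'} then lam else 0) +
          b * ∏ j ∈ (Finset.Icc 1 j').filter (fun j => α j = true), s j
      else 0 := by
  have hj'mem : j' ∈ Finset.Icc 1 j' := Finset.mem_Icc.mpr ⟨hj', le_rfl⟩
  rw [Fintype.sum_bool]
  simp only [Bool.false_eq_true, if_true, if_false]
  by_cases hα : α j' = true
  · -- true term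
    have htrue : (∏ j ∈ Finset.Icc 1 j',
        (if j = j' then (if α j then s j else 0) else (if α j then s j else 1))) =
        ∏ j ∈ (Finset.Icc 1 j').filter (fun j => α j = true), s j := by
      rw [Finset.prod_filter]
      apply Finset.prod_congr rfl
      intro j hj
      by_cases hjj : j = j'
      · subst hjj; simp [hα]
      · simp [hjj]
    -- false term
    have hfalse : (∏ j ∈ Finset.Icc 1 j',
        (if j = j' then (if α j then lam else 1) else (if α j then (0:ℝ) else 1))) =
        lam * (if ((Finset.Icc 1 j') \ {j'}).filter (fun j => α j = true) = ∅ then 1 else 0) := by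
      rw [Finset.prod_eq_prod_diff_singleton_mul hj'mem]
      rw [if_pos rfl, if_pos hα, mul_comm]
      congr 1
      rw [← myProdIndicator α]
      apply Finset.prod_congr rfl
      intro j hj
      have : j ≠ j' := (Finset.mem_sdiff.mp hj).2 ∘ Finset.mem_singleton.mpr
      simp [this]
    have hne : ((Finset.Icc 1 j').filter fun j => α j = true) ≠ ∅ := by
      apply Finset.nonempty_iff_ne_empty.mp
      exact ⟨j', Finset.mem_filter.mpr ⟨hj'mem, hα⟩⟩
    have hmem : j' ∈ (Finset.Icc 1 j').filter fun j => α j = true :=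
      Finset.mem_filter.mpr ⟨hj'mem, hα⟩
    rw [if_neg hne, if_pos hmem, htrue, hfalse]
    have hiff : (((Finset.Icc 1 j') \ {j'}).filter (fun j => α j = true) = ∅)
        ↔ (((Finset.Icc 1 j').filter fun j => α j = true) = {j'}) := by
      constructor
      · intro h
        apply Finset.Subset.antisymm
        · intro x hx
          rw [Finset.mem_singleton]
          by_contra hxj
          have := Finset.mem_filter.mp hx
          have : x ∈ ((Finset.Icc 1 j') \ {j'}).filter (fun j => α j = true) :=
            Finset.mem_filter.mpr ⟨Finset.mem_sdiff.mpr ⟨this.1, by simp [hxj]⟩, this.2⟩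
          simp [h] at this
        · intro x hx
          rw [Finset.mem_singleton] at hx
          subst hx; exact hmem
      · intro h
        ext x
        simp only [Finset.mem_filter, Finset.mem_sdiff, Finset.mem_singleton,
          Finset.notMem_empty, iff_false]
        rintro ⟨⟨hx1, hx2⟩, hx3⟩
        have : x ∈ (Finset.Icc 1 j').filter fun j => α j = true :=
          Finset.mem_filter.mpr ⟨hx1, hx3⟩
        rw [h, Finset.mem_singleton] at this
        exact hx2 this
    by_cases hc : ((Finset.Icc 1 j') \ {j'}).filter (fun j => α j = true) = ∅
    · rw [if_pos hc, if_pos (hiff.mp hc)]; ring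
    · rw [if_neg hc, if_neg (fun h => hc (hiff.mpr h))]; ring
  · -- α j' = false
    have hαf : α j' = false := by simpa using hα
    have htrue : (∏ j ∈ Finset.Icc 1 j',
        (if j = j' then (if α j then s j else 0) else (if α j then s j else 1))) = 0 :=
      Finset.prod_eq_zero hj'mem (by simp [hαf])
    have hfalse : (∏ j ∈ Finset.Icc 1 j',
        (if j = j' then (if α j then lam else 1) else (if α j then (0:ℝ) else 1))) =
        if ((Finset.Icc 1 j').filter fun j => α j = true) = ∅ then 1 else 0 := by
      rw [← myProdIndicator α]
      apply Finset.prod_congr rfl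
      intro j hj
      by_cases hjj : j = j'
      · subst hjj; simp [hαf]
      · simp [hjj]
    rw [htrue, hfalse, mul_zero, one_mul, zero_add]
    by_cases he : ((Finset.Icc 1 j').filter fun j => α j = true) = ∅
    · rw [if_pos he, if_pos he]
    · rw [if_neg he, if_neg he, if_neg]
      intro h
      exact hα (Finset.mem_filter.mp h).2
end

section
/- Fix integers n, m ≥ 1 and, for each i ∈ {1,…,n}, reals b_i ≥ 0, p_i ∈ [0,1], γ_i ≥ 0 and s_{i,j} ≥ 0 for j ∈ {1,…,m}. For a subset A ⊆ {1,…,m} define the local-hypothesis weight G_i(A) = b_i·(1 − p_i + p_i·exp(−γ_i)) if A = ∅ and G_i(A) = b_i·p_i·exp(−γ_i)·∏_{j∈A} s_{i,j} if A ≠ ∅. Set c_i(1) = p_i·exp(−γ_i) and c_i(0) = 1 − p_i. Then ∑_{β : {1,…,m} → {1,…,n}} ∏_{i=1}^{n} G_i(β^{−1}({i})) = ∑_{α ∈ {0,1}^{n×m}} ∑_{β : {1,…,m} → {1,…,n}} ∑_{D ∈ {0,1}^{n}} ∏_{i=1}^{n} [ b_i · c_i(D_i) · ∏_{j=1}^{m}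 Φ(D_i, α_{i,j}) · (s_{i,j} if α_{i,j} = 1 else 1) ] · ∏_{i=1}^{n} ∏_{j=1}^{m} Ψ^{i,j}(α_{i,j}, β_j). That is, the sum over global association hypotheses of the products of local hypothesis weights equals the sum of the factorized joint model over detection variables, object-oriented association variables, and measurement-oriented association variables. -/
open scoped BigOperators

/-- The detection consistency factor `Φ(D,a)`: equal to `1` if `D = 1` or `a = 0`,
and `0` otherwise. -/
def Phi (D a : Bool) : ℝ := if D = true ∨ a = false then 1 else 0

/-- The association consistency factor `Ψ^{i,j}(a,b)`: equal to `1` if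
(`a = 1` and `b = i`) or (`a = 0` and `b ≠ i`), and `0` otherwise. -/
def PsiF {n : ℕ} (i : Fin n) (a : Bool) (b : Fin n) : ℝ :=
  if (a = true ∧ b = i) ∨ (a = false ∧ b ≠ i) then 1 else 0

/-- The sum over global association hypotheses `β : {1,…,m} → {1,…,n}` of the products
of the unnormalized ZIP local hypothesis weights `G_i(β⁻¹({i}))` equals the sum of the
factorized joint model over detection variables `D`, object-oriented association
variables `α`, and measurement-oriented association variables `β`. -/
theorem global_hypothesis_factorization (n m : ℕ) (hn : 1 ≤ n) (hm : 1 ≤ m)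
    (b p γ : Fin n → ℝ) (s : Fin n → Fin m → ℝ)
    (hb : ∀ i, 0 ≤ b i) (hp : ∀ i, p i ∈ Set.Icc (0 : ℝ) 1)
    (hγ : ∀ i, 0 ≤ γ i) (hs : ∀ i j, 0 ≤ s i j) :
    (∑ β : Fin m → Fin n, ∏ i : Fin n,
        (if (Finset.univ.filter fun j => β j = i) = ∅ then
          b i * (1 - p i + p i * Real.exp (-γ i))
        else
          b i * (p i * Real.exp (-γ i)) *
            ∏ j ∈ Finset.univ.filter (fun j => β j = i), s i j)) =
      ∑ α : Fin n → Fin m → Bool, ∑ β : Fin m → Fin n, ∑ D : Fin n → Bool,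
        (∏ i : Fin n, b i * (if D i then p i * Real.exp (-γ i) else 1 - p i) *
            ∏ j : Fin m, Phi (D i) (α i j) * (if α i j then s i j else 1)) *
          ∏ i : Fin n, ∏ j : Fin m, PsiF i (α i j) (β j) := by
  rw [Finset.sum_comm]
  apply Finset.sum_congr rfl
  intro β _
  set α₀ : Fin n → Fin m → Bool := fun i j => decide (β j = i) with hα₀
  have hΨ : ∀ α : Fin n → Fin m → Bool,
      (∏ i : Fin n, ∏ j : Fin m, PsiF i (α i j) (β j)) =
        if α = α₀ then (1 : ℝ) else 0 := by
    intro α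
    have h1 : ∀ i j, PsiF i (α i j) (β j) = if α i j = α₀ i j then (1 : ℝ) else 0 := by
      intro i j
      by_cases hij : β j = i <;> cases h : α i j <;> simp [PsiF, hα₀, hij, h]
    by_cases h : α = α₀
    · subst h; simp [h1]
    · rw [if_neg h]
      obtain ⟨i, hi⟩ := Function.ne_iff.mp h
      obtain ⟨j, hj⟩ := Function.ne_iff.mp hi
      refine Finset.prod_eq_zero (Finset.mem_univ i) ?_
      refine Finset.prod_eq_zero (Finset.mem_univ j) ?_
      rw [h1 i j, if_neg hj]
  simp only [hΨ]
  simp_rw [← Finset.sum_mul]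
  simp only [mul_ite, mul_one, mul_zero, Finset.sum_ite_eq', Finset.mem_univ, if_true]
  rw [← Fintype.prod_sum (fun i (d : Bool) =>
      (if d then b i * (p i * Real.exp (-γ i)) else b i * (1 - p i)) *
        ∏ j : Fin m, (if α₀ i j then Phi d (α₀ i j) * s i j else Phi d (α₀ i j)))]
  apply Finset.prod_congr rfl
  intro i _
  rw [Fintype.sum_bool]
  by_cases hA : (Finset.univ.filter fun j => β j = i) = ∅
  · have hemp : ∀ j, α₀ i j = false := by
      intro j
      have : β j ≠ i := by
        intro h
        exact (Finset.notMem_empty j) (hA ▸ Finset.mem_filter.mpr ⟨Finset.mem_univ j, h⟩)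
      simp [hα₀, this]
    simp only [hA, if_true, hemp, Phi, Bool.false_eq_true, or_true, if_false, mul_one,
      if_true, Finset.prod_const_one]
    ring
  · simp only [hA, if_false]
    obtain ⟨j₀, hj₀⟩ := Finset.nonempty_iff_ne_empty.mpr hA
    have hj₀' : β j₀ = i := (Finset.mem_filter.mp hj₀).2
    have hfalse : (∏ j : Fin m,
        (if α₀ i j then Phi false (α₀ i j) * s i j else Phi false (α₀ i j))) = 0 := by
      apply Finset.prod_eq_zero (Finset.mem_univ j₀)
      simp [Phi, hα₀, hj₀']
    have htrue : (∏ j : Fin m,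
        (if α₀ i j then Phi true (α₀ i j) * s i j else Phi true (α₀ i j))) =
        ∏ j ∈ Finset.univ.filter (fun j => β j = i), s i j := by
      rw [Finset.prod_filter]
      apply Finset.prod_congr rfl
      intro j _
      by_cases h : β j = i <;> simp [Phi, hα₀, h]
    rw [hfalse, htrue]
    simp only [if_true]
    ring
end
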